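/- Let q = 4^d with d ≥ 2 and let F = F_{4^d}. Suppose x, y ∈ F \ {0} with x³ ≠ 1, y³ ≠ 1, x³ ≠ y³, and λ, μ ∈ F_4 \ {0} satisfy λ + μx = y and λ + μx^{−2} = y^{−2}. Then a contradiction follows; i.e., no such x, y, λ, μ exist. -/
import Mathlib


/-- collinearity exclusion for V₁ = {P(x, x⁻²)} in PG(2d−1,4).
λ, μ range over F_4 \ {0}, i.e. the cube roots of unity of F = F_{4^d}. -/
theorem stmt12 (d : ℕ) (hd : 2 ≤ d) (F : Type) [Field F] [Fintype F]
    (hcard : Fintype.card F = 4 ^ d) :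
    ¬ ∃ x y l m : F, x ≠ 0 ∧ y ≠ 0 ∧ x ^ 3 ≠ 1 ∧ y ^ 3 ≠ 1 ∧ x ^ 3 ≠ y ^ 3 ∧
      l ^ 3 = 1 ∧ m ^ 3 = 1 ∧
      l + m * x = y ∧ l + m * x⁻¹ ^ 2 = y⁻¹ ^ 2 := by
  rintro ⟨x, y, l, m, hx, hy, hx3, hy3, hxy, hl, hm, h1, h2⟩
  have hc : ((4 ^ d : ℕ) : F) = 0 := by rw [← hcard]; exact FiniteField.cast_card_eq_zero F
  have htwo : (2 : F) = 0 := by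
    have h4 : (2 : F) ^ (2 * d) = 0 := by
      push_cast at hc
      rw [pow_mul]
      have h22 : (2:F)^2 = 4 := by norm_num
      rw [h22]; exact hc
    exact pow_eq_zero_iff (n := 2 * d) (M₀ := F) (a := (2:F)) (by omega) |>.mp h4
  have h2' : l * (x ^ 2 * y ^ 2) + m * y ^ 2 = x ^ 2 := by
    field_simp at h2
    linear_combination h2
  have hA : (l ^ 2 * x * y + m ^ 2 * y + x) ^ 2 = 0 := by
    linear_combination h2' + l * x^2 * y^2 * hl + m * y^2 * hm +
      (l^2*m^2*x*y^2 + l^2*x^2*y + m^2*x*y + x^2) * htwo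
  have hA0 : l ^ 2 * x * y + m ^ 2 * y + x = 0 :=
    pow_eq_zero_iff two_ne_zero |>.mp hA
  have hB : x + l^2*m*x^2 + l*m^2 = 0 := by
    linear_combination hA0 + (l^2*x + m^2)*h1 - x*hl - x*hm - x*htwo
  have hC : l^2*m*x + l*m^2*x^2 = 1 := by
    linear_combination l^2*m*hB - l*m^2*x^2*hl - m^3*hl - hm - htwo
  exact hxy (by linear_combination (y^2 + y*(l+m*x) + (l+m*x)^2)*h1 - x^3*hm - hl - 3*hC - 2*htwo)
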